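/- Let (A, (f,g)) be a dibaric algebra and let {F₁, …, F_m} be a basis of the subspace J_f of f-invariant linear forms. Then A is conservative if and only if there exist elements u_{ik} ∈ A (1 ≤ i, k ≤ m) with u_{ik} = u_{ki} such that xy = Σ_{i,k=1}^m F_i(x) F_k(y) u_{ik} for all x, y ∈ A. -/

import Mathlib

open scoped BigOperators

/-- Let (A, (f,g)) be a dibaric algebra and let {F₁, …, F_m} be a basis of the subspace J_f of
f-invariant linear forms. Then A is conservative (J_f^⊥ = ann A) if and only if there exist
elements u_{ik} ∈ A with u_{ik} = u_{ki} such that xy = Σ_{i,k} F_i(x) F_k(y) u_{ik}. -/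
theorem stmt_6 (A : Type*) [AddCommGroup A] [Module ℝ A]
    (mul : A →ₗ[ℝ] A →ₗ[ℝ] A)
    (hcomm : ∀ x y : A, mul x y = mul y x)
    (f g : A →ₗ[ℝ] ℝ) (hf : f ≠ 0) (hg : g ≠ 0)
    (hbq : ∀ x y : A, f (mul x y) = (f x * g y + f y * g x) / 2 ∧
                      g (mul x y) = (f x * g y + f y * g x) / 2)
    (m : ℕ) (F : Fin m → (A →ₗ[ℝ] ℝ))
    (hFinv : ∀ i : Fin m, ∀ a b : A, (F i) (mul a b) = (f a * (F i) b + f b * (F i) a) / 2)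
    (hFindep : LinearIndependent ℝ F)
    (hFspan : ∀ G : A →ₗ[ℝ] ℝ,
      (∀ a b : A, G (mul a b) = (f a * G b + f b * G a) / 2) →
      G ∈ Submodule.span ℝ (Set.range F)) :
    ({z : A | ∀ G : A →ₗ[ℝ] ℝ,
        (∀ a b : A, G (mul a b) = (f a * G b + f b * G a) / 2) → G z = 0}
      = {z : A | ∀ t : A, mul z t = 0})
    ↔
    (∃ u : Fin m → Fin m → A, (∀ i k : Fin m, u i k = u k i) ∧
      ∀ x y : A, mul x y = ∑ i : Fin m, ∑ k : Fin m, (F i x * F k y) • u i k) := by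
  -- pick t0 with f t0 ≠ 0
  obtain ⟨t0, ht0⟩ : ∃ t0 : A, f t0 ≠ 0 := by
    by_contra h
    push_neg at h
    exact hf (by ext x; simpa using h x)
  -- annihilator is always contained in J_f^⊥
  have hann_sub : ∀ z : A, (∀ t : A, mul z t = 0) →
      ∀ G : A →ₗ[ℝ] ℝ, (∀ a b : A, G (mul a b) = (f a * G b + f b * G a) / 2) → G z = 0 := by
    intro z hz G hG
    have h1 : f z * G z = 0 := by
      have := hG z z
      rw [hz z, map_zero] at this
      linarith
    have h2 : f z * G t0 + f t0 * G z = 0 := by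
      have := hG z t0
      rw [hz t0, map_zero] at this
      linarith
    rcases mul_eq_zero.1 h1 with hfz | hGz
    · rw [hfz, zero_mul, zero_add] at h2
      exact (mul_eq_zero.1 h2).resolve_left ht0
    · exact hGz
  constructor
  · -- conservative → formula
    intro hcons
    -- the map A → ℝ^m given by the F i is surjective
    have hsurj : Function.Surjective (LinearMap.pi F : A →ₗ[ℝ] (Fin m → ℝ)) := by
      rw [← LinearMap.range_eq_top]
      by_contra hne
      obtain ⟨φ, φne, hφ⟩ :=
        (LinearMap.range (LinearMap.pi F)).exists_dual_map_eq_bot_of_lt_top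
          (lt_top_iff_ne_top.2 hne) inferInstance
      have hker : ∀ x : A, φ ((LinearMap.pi F) x) = 0 := by
        intro x
        have : φ ((LinearMap.pi F) x) ∈
            Submodule.map φ (LinearMap.range (LinearMap.pi F)) :=
          Submodule.mem_map_of_mem (LinearMap.mem_range_self _ x)
        rw [hφ] at this
        simpa using this
      set c : Fin m → ℝ := fun i => φ (fun j => if i = j then 1 else 0) with hc
      have hzero : (∑ i, c i • F i) = 0 := by
        ext x
        have := hker x
        rw [LinearMap.pi_apply_eq_sum_univ φ ((LinearMap.pi F) x)] at this
        simpa [LinearMap.pi_apply, smul_eq_mul, mul_comm] using this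
      have hc0 : ∀ i, c i = 0 := Fintype.linearIndependent_iff.1 hFindep c hzero
      apply φne
      apply LinearMap.ext
      intro v
      rw [LinearMap.pi_apply_eq_sum_univ φ v]
      have h0 : ∀ x : Fin m, (φ fun j => if x = j then (1:ℝ) else 0) = 0 := hc0
      simp [h0]
    -- choose a "dual family" e i
    choose e he using fun i => hsurj (fun j => if i = j then (1 : ℝ) else 0)
    have heF : ∀ i k : Fin m, F k (e i) = if i = k then 1 else 0 := by
      intro i k
      have := congrFun (he i) k
      simpa [LinearMap.pi_apply] using this
    -- for every x, the remainder lies in the annihilator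
    have hrem : ∀ x : A, ∀ t : A, mul (x - ∑ i, F i x • e i) t = 0 := by
      intro x
      have hmem : (x - ∑ i, F i x • e i) ∈
          {z : A | ∀ G : A →ₗ[ℝ] ℝ,
            (∀ a b : A, G (mul a b) = (f a * G b + f b * G a) / 2) → G z = 0} := by
        intro G hG
        obtain ⟨cG, hcG⟩ := (Submodule.mem_span_range_iff_exists_fun ℝ).1 (hFspan G hG)
        have hFzero : ∀ k, F k (x - ∑ i, F i x • e i) = 0 := by
          intro k
          simp [map_sub, map_sum, map_smul, heF, Finset.sum_ite_eq, smul_eq_mul, mul_comm]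
        rw [← hcG]
        simp [hFzero]
      rw [hcons] at hmem
      exact hmem
    refine ⟨fun i k => mul (e i) (e k), fun i k => hcomm _ _, fun x y => ?_⟩
    have hx : mul x y = mul (∑ i, F i x • e i) y := by
      have h := hrem x y
      rw [map_sub, LinearMap.sub_apply, sub_eq_zero] at h
      exact h
    have hy : mul (∑ i, F i x • e i) y = mul (∑ i, F i x • e i) (∑ k, F k y • e k) := by
      rw [hcomm, hcomm (∑ i, F i x • e i) (∑ k, F k y • e k)]
      have h := hrem y (∑ i, F i x • e i)
      rw [map_sub, LinearMap.sub_apply, sub_eq_zero] at h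
      exact h
    rw [hx, hy]
    simp only [map_sum, map_smul, LinearMap.sum_apply, LinearMap.smul_apply,
      Finset.smul_sum, smul_smul]
    rw [Finset.sum_comm]
    refine Finset.sum_congr rfl fun i _ => Finset.sum_congr rfl fun k _ => ?_
    rw [mul_comm]
  · -- formula → conservative
    rintro ⟨u, _, hu⟩
    ext z
    simp only [Set.mem_setOf_eq]
    constructor
    · intro hz t
      have hFz : ∀ i, F i z = 0 := fun i => hz (F i) (hFinv i)
      rw [hu z t]
      simp [hFz]
    · intro hz
      exact hann_sub z hz
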